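/- Let T be a large subsemigroup of a finitely generated holomorphic semigroup S (i.e., S \ T is finite). Then F(S) = F(T) and J(S) = J(T). -/

import Mathlib

open Filter Topology

/-- A family `S` of maps is normal on `V` if every sequence from `S` has a subsequence
converging locally uniformly on `V` or diverging uniformly to `∞` on compact subsets of `V`. -/
def NormalOn (S : Set (ℂ → ℂ)) (V : Set ℂ) : Prop :=
  ∀ seq : ℕ → ℂ → ℂ, (∀ n, seq n ∈ S) →
    ∃ φ : ℕ → ℕ, StrictMono φ ∧
      ((∃ g : ℂ → ℂ, TendstoLocallyUniformlyOn (fun n => seq (φ n)) g atTop V) ∨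
       (∀ K : Set ℂ, K ⊆ V → IsCompact K → ∀ M : ℝ,
          ∀ᶠ n in atTop, ∀ z ∈ K, M ≤ ‖seq (φ n) z‖))

/-- Fatou set of a semigroup of holomorphic maps: points of local normality. -/
def FatouSet (S : Set (ℂ → ℂ)) : Set ℂ :=
  {z | ∃ V ∈ 𝓝 z, NormalOn S V}

/-- Julia set: complement of the Fatou set. -/
def JuliaSet (S : Set (ℂ → ℂ)) : Set ℂ := (FatouSet S)ᶜ

/-- Escaping set of a semigroup: points where every element is iteratively divergent. -/
def EscapingSet (S : Set (ℂ → ℂ)) : Set ℂ :=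
  {z | ∀ f ∈ S, Tendsto (fun n => ‖f^[n] z‖) atTop atTop}

/-- Escaping set of a single function. -/
def EscapingSetOf (f : ℂ → ℂ) : Set ℂ :=
  {z | Tendsto (fun n => ‖f^[n] z‖) atTop atTop}

/-- A holomorphic semigroup: a nonempty set of entire maps closed under composition. -/
def HolomorphicSemigroup (S : Set (ℂ → ℂ)) : Prop :=
  S.Nonempty ∧ (∀ f ∈ S, Differentiable ℂ f) ∧ ∀ f ∈ S, ∀ g ∈ S, f ∘ g ∈ S

/-- A transcendental entire function: entire and not a polynomial. -/
def TranscendentalEntire (f : ℂ → ℂ) : Prop :=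
  Differentiable ℂ f ∧ ¬ ∃ p : Polynomial ℂ, ∀ z, f z = p.eval z

/-- A transcendental (entire) semigroup. -/
def TranscendentalSemigroup (S : Set (ℂ → ℂ)) : Prop :=
  S.Nonempty ∧ (∀ f ∈ S, TranscendentalEntire f) ∧ ∀ f ∈ S, ∀ g ∈ S, f ∘ g ∈ S

/-- `T` is a subsemigroup of `S`. -/
def IsSubsemigroupOf (T S : Set (ℂ → ℂ)) : Prop :=
  T.Nonempty ∧ T ⊆ S ∧ ∀ f ∈ T, ∀ g ∈ T, f ∘ g ∈ T

/-- `T` has finite index in `S`: `S` is a finite union of translates `fᵢ ∘ T` with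
`fᵢ ∈ S ∪ {id}`. -/
def FiniteIndexIn (T S : Set (ℂ → ℂ)) : Prop :=
  ∃ (n : ℕ) (fs : Fin n → ℂ → ℂ), (∀ i, fs i ∈ S ∨ fs i = id) ∧
    S = ⋃ i, (fun h => fs i ∘ h) '' T

/-- `T` has cofinite index in `S`. -/
def CofiniteIndexIn (T S : Set (ℂ → ℂ)) : Prop :=
  ∃ (n : ℕ) (fs : Fin n → ℂ → ℂ), (∀ i, fs i ∈ S ∨ fs i = id) ∧
    ∀ f ∈ S, ∃ i, fs i ∘ f ∈ T

/-- Membership in the semigroup generated by a set `A` of maps: all finite compositions. -/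
inductive SemigroupGen (A : Set (ℂ → ℂ)) : (ℂ → ℂ) → Prop
  | base : ∀ f ∈ A, SemigroupGen A f
  | comp : ∀ f g, SemigroupGen A f → SemigroupGen A g → SemigroupGen A (f ∘ g)

/-- A finitely generated semigroup of maps. -/
def FinitelyGeneratedSemigroup (S : Set (ℂ → ℂ)) : Prop :=
  ∃ A : Set (ℂ → ℂ), A.Finite ∧ S = {f | SemigroupGen A f}

/-- `U` is a component of the Fatou set of `S`. -/
def IsFatouComponent (S : Set (ℂ → ℂ)) (U : Set ℂ) : Prop :=
  ∃ z ∈ FatouSet S, U = connectedComponentIn (FatouSet S) z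

/-- `S` is discontinuous at `z`: some neighborhood `V` of `z` satisfies `f(V) ∩ V = ∅`
for all `f ∈ S`. -/
def DiscontinuousAt (S : Set (ℂ → ℂ)) (z : ℂ) : Prop :=
  ∃ V ∈ 𝓝 z, ∀ f ∈ S, f '' V ∩ V = ∅

/-- The regular set of `S`. -/
def RegularSet (S : Set (ℂ → ℂ)) : Set ℂ := {z | DiscontinuousAt S z}

/-- The limit set of `S`. -/
def LimitSet (S : Set (ℂ → ℂ)) : Set ℂ :=
  {z | ∃ (z₀ : ℂ) (fs : ℕ → ℂ → ℂ), (∀ n, fs n ∈ S) ∧ Function.Injective fs ∧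
    Tendsto (fun n => fs n z₀) atTop (𝓝 z)}

/-- A partial fundamental set for `S`. -/
def PartialFundamentalSet (S : Set (ℂ → ℂ)) (U : Set ℂ) : Prop :=
  U.Nonempty ∧ U ⊆ RegularSet S ∧ ∀ f ∈ S, f '' U ∩ U = ∅

/-- A fundamental set for `S`. -/
def FundamentalSet (S : Set (ℂ → ℂ)) (U : Set ℂ) : Prop :=
  PartialFundamentalSet S U ∧ (⋃ f ∈ S, f '' U) = RegularSet S

lemma constLUO (g : ℂ → ℂ) (V : Set ℂ) :
    TendstoLocallyUniformlyOn (fun _ : ℕ => g) g atTop V := by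
  intro u hu x _
  exact ⟨V, self_mem_nhdsWithin, Filter.Eventually.of_forall fun n y _ => refl_mem_uniformity hu⟩

lemma normal_up (S T : Set (ℂ → ℂ)) (hTS : T ⊆ S) (hRees : (S \ T).Finite)
    (V : Set ℂ) (hN : NormalOn T V) : NormalOn S V := by
  intro seq hseq
  by_cases h : ∃ᶠ n in atTop, seq n ∈ T
  · obtain ⟨φ, hφ, hmem⟩ := extraction_of_frequently_atTop h
    obtain ⟨ψ, hψ, hres⟩ := hN (fun n => seq (φ n)) hmem
    exact ⟨φ ∘ ψ, hφ.comp hψ, hres⟩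
  · rw [not_frequently] at h
    have h2 : ∃ g ∈ S \ T, ∃ᶠ n in atTop, seq n = g := by
      by_contra hc
      push_neg at hc
      have hev : ∀ᶠ n in atTop, ∀ g ∈ S \ T, seq n ≠ g :=
        (eventually_all_finite hRees).2 fun g hg => hc g hg
      obtain ⟨n, hn1, hn2⟩ := (h.and hev).exists
      exact hn2 (seq n) ⟨hseq n, hn1⟩ rfl
    obtain ⟨g, _, hfreq⟩ := h2
    obtain ⟨φ, hφ, heq⟩ := extraction_of_frequently_atTop hfreq
    refine ⟨φ, hφ, Or.inl ⟨g, ?_⟩⟩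
    have hc : (fun n => seq (φ n)) = fun _ => g := funext heq
    rw [hc]; exact constLUO g V

theorem stmt_12 (S T : Set (ℂ → ℂ)) (hS : HolomorphicSemigroup S)
    (hfg : FinitelyGeneratedSemigroup S) (hT : IsSubsemigroupOf T S)
    (hRees : (S \ T).Finite) :
    FatouSet S = FatouSet T ∧ JuliaSet S = JuliaSet T := by
  have hF : FatouSet S = FatouSet T := by
    ext z
    constructor
    · rintro ⟨V, hV, hN⟩
      exact ⟨V, hV, fun seq hs => hN seq fun n => hT.2.1 (hs n)⟩
    · rintro ⟨V, hV, hN⟩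
      exact ⟨V, hV, normal_up S T hT.2.1 hRees V hN⟩
  exact ⟨hF, by rw [JuliaSet, JuliaSet, hF]⟩
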